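/- Let A be a group. There is a bijective correspondence between skew brace structures on A with additive group (A,·) and regular subgroups of the holomorph Hol(A) = A ⋊ Aut(A): a skew brace gives the regular subgroup {(a, λ_a) : a ∈ A}, and a regular subgroup G ≤ Hol(A) gives the skew brace with a∘b = a·f(b), where (a,f) is the unique element of G with first coordinate a. -/
import Mathlib


/-- A skew brace: a set `A` with two group operations, the "additive" one given by
the ambient `Group A` instance (written multiplicatively, `·`), and a second group
operation `circ` (`∘`) with identity `cone` and inverses `cinv`, satisfying the
compatibility `a ∘ (b · c) = (a ∘ b) · a⁻¹ · (a ∘ c)`. -/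
structure SkewBrace (A : Type*) [Group A] where
  circ : A → A → A
  circ_assoc : ∀ a b c : A, circ (circ a b) c = circ a (circ b c)
  cone : A
  cone_circ : ∀ a : A, circ cone a = a
  circ_cone : ∀ a : A, circ a cone = a
  cinv : A → A
  cinv_circ : ∀ a : A, circ (cinv a) a = cone
  circ_cinv : ∀ a : A, circ a (cinv a) = cone
  compat : ∀ a b c : A, circ a (b * c) = circ a b * a⁻¹ * circ a c


/-- The holomorph `Hol(A) = A ⋊ Aut(A)`. -/
abbrev Hol (A : Type*) [Group A] := A ⋊[MonoidHom.id (MulAut A)] MulAut A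

/-- A subgroup of the holomorph is regular if for each `a : A` it contains a unique
element whose action sends `1` to `a`, i.e. with first coordinate `a`. -/
def IsRegularSubgroup {A : Type*} [Group A] (G : Subgroup (Hol A)) : Prop :=
  ∀ a : A, ∃! x : Hol A, x ∈ G ∧ x.left = a

namespace SkewBraceAux

variable {A : Type*} [Group A]

lemma circ_one (B : SkewBrace A) (a : A) : B.circ a 1 = a := by
  have h := B.compat a 1 1
  rw [mul_one, mul_assoc] at h
  have h2 := left_eq_mul.mp h
  exact (inv_mul_eq_one.mp h2).symm

lemma cone_eq_one (B : SkewBrace A) : B.cone = 1 := by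
  have h1 := circ_one B B.cone
  have h2 := B.cone_circ 1
  rw [h2] at h1; exact h1.symm

/-- λ_a as a bare function -/
def lamFun (B : SkewBrace A) (a b : A) : A := a⁻¹ * B.circ a b

lemma circ_eq_lam (B : SkewBrace A) (a b : A) : B.circ a b = a * lamFun B a b := by
  simp [lamFun]

lemma key (B : SkewBrace A) (a b c : A) :
    B.circ (B.circ a b) c = B.circ a b * lamFun B a (lamFun B b c) := by
  have h := B.compat a b (b⁻¹ * B.circ b c)
  rw [mul_inv_cancel_left] at h
  rw [B.circ_assoc, h]
  simp [lamFun, mul_assoc]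

lemma lamFun_leftinv (B : SkewBrace A) (a c : A) :
    lamFun B (B.cinv a) (lamFun B a c) = c := by
  have h := key B (B.cinv a) a c
  rw [B.cinv_circ, cone_eq_one B] at h
  have h1 : B.circ 1 c = c := by
    have := B.cone_circ c; rwa [cone_eq_one B] at this
  rw [h1, one_mul] at h
  exact h.symm

lemma lamFun_rightinv (B : SkewBrace A) (a c : A) :
    lamFun B a (lamFun B (B.cinv a) c) = c := by
  have h := key B a (B.cinv a) c
  rw [B.circ_cinv, cone_eq_one B] at h
  have h1 : B.circ 1 c = c := by
    have := B.cone_circ c; rwa [cone_eq_one B] at this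
  rw [h1, one_mul] at h
  exact h.symm

/-- λ_a as an automorphism. -/
def lam (B : SkewBrace A) (a : A) : MulAut A where
  toFun := lamFun B a
  invFun := lamFun B (B.cinv a)
  left_inv := lamFun_leftinv B a
  right_inv := lamFun_rightinv B a
  map_mul' b c := by
    simp only [lamFun, B.compat a b c]
    group

lemma lam_apply (B : SkewBrace A) (a b : A) : lam B a b = a⁻¹ * B.circ a b := rfl

/-- The regular subgroup associated to a skew brace. -/
def toSub (B : SkewBrace A) : Subgroup (Hol A) where
  carrier := {x : Hol A | ∀ b : A, x.left * x.right b = B.circ x.left b}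
  one_mem' := by
    intro b
    have := B.cone_circ b
    rw [cone_eq_one B] at this
    simpa using this.symm
  mul_mem' := by
    intro x y hx hy b
    have hxr : ∀ c, x.right c = lamFun B x.left c := by
      intro c
      have := hx c
      rw [circ_eq_lam] at this
      exact mul_left_cancel this
    have hleft : (x * y).left = B.circ x.left y.left := by
      rw [SemidirectProduct.mul_left]
      exact hx y.left
    rw [hleft]
    have hr : (x * y).right b = x.right (y.right b) := rfl
    rw [hr, key B x.left y.left b, ← hleft, SemidirectProduct.mul_left]
    congr 1
    rw [hxr]
    congr 1
    have := hy b
    rw [circ_eq_lam] at this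
    exact mul_left_cancel this
  inv_mem' := by
    intro x hx b
    have hxr : ∀ c, x.right c = lamFun B x.left c := by
      intro c
      have := hx c
      rw [circ_eq_lam] at this
      exact mul_left_cancel this
    have hrx : x.right = lam B x.left := by
      ext c; exact hxr c
    have hinvr : (x⁻¹).right = (lam B x.left)⁻¹ := by
      rw [SemidirectProduct.inv_right, hrx]
    have hinvr' : ∀ c, (x⁻¹).right c = lamFun B (B.cinv x.left) c := by
      intro c; rw [hinvr]; rfl
    have hlam_cinv : lamFun B (B.cinv x.left) x.left⁻¹ = B.cinv x.left := by
      have h1 : lamFun B (B.cinv x.left) x.left = (B.cinv x.left)⁻¹ := by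
        simp only [lamFun]
        rw [B.cinv_circ, cone_eq_one B, mul_one]
      have : lamFun B (B.cinv x.left) (x.left * x.left⁻¹) = 1 := by
        rw [mul_inv_cancel]
        show (lam B (B.cinv x.left)) 1 = 1
        exact map_one _
      rw [show lamFun B (B.cinv x.left) (x.left * x.left⁻¹)
            = (lam B (B.cinv x.left)) (x.left * x.left⁻¹) from rfl, map_mul] at this
      have h2 : lamFun B (B.cinv x.left) x.left * lamFun B (B.cinv x.left) x.left⁻¹ = 1 := this
      rw [h1] at h2
      exact (inv_mul_eq_one.mp h2).symm
    have hinvl : (x⁻¹).left = B.cinv x.left := by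
      rw [SemidirectProduct.inv_left, hrx]
      show (lam B x.left)⁻¹ x.left⁻¹ = B.cinv x.left
      show lamFun B (B.cinv x.left) x.left⁻¹ = B.cinv x.left
      exact hlam_cinv
    rw [hinvl, hinvr' b, circ_eq_lam]

lemma mem_toSub_iff (B : SkewBrace A) (x : Hol A) :
    x ∈ toSub B ↔ ∀ b : A, x.left * x.right b = B.circ x.left b := Iff.rfl

lemma toSub_regular (B : SkewBrace A) : IsRegularSubgroup (toSub B) := by
  intro a
  refine ⟨⟨a, lam B a⟩, ⟨?_, rfl⟩, ?_⟩
  · intro b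
    exact (circ_eq_lam B a b).symm
  · rintro y ⟨hy, hyl⟩
    have : y.right = lam B a := by
      ext c
      have := hy c
      rw [hyl] at this
      rw [circ_eq_lam] at this
      exact mul_left_cancel this
    exact SemidirectProduct.ext hyl this

section Reg

variable (G : Subgroup (Hol A)) (hG : IsRegularSubgroup G)

noncomputable def t (a : A) : Hol A := (hG a).exists.choose

lemma t_mem (a : A) : t G hG a ∈ G := (hG a).exists.choose_spec.1
lemma t_left (a : A) : (t G hG a).left = a := (hG a).exists.choose_spec.2
lemma t_unique {a : A} {y : Hol A} (hy : y ∈ G) (hyl : y.left = a) : y = t G hG a := by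
  obtain ⟨x, hx, hux⟩ := hG a
  rw [hux y ⟨hy, hyl⟩, hux (t G hG a) ⟨t_mem G hG a, t_left G hG a⟩]

lemma t_one : t G hG 1 = 1 :=
  (t_unique G hG (one_mem G) rfl).symm

/-- The skew brace associated to a regular subgroup. -/
noncomputable def ofReg : SkewBrace A where
  circ a b := (t G hG a * t G hG b).left
  circ_assoc a b c := by
    show (t G hG ((t G hG a * t G hG b).left) * t G hG c).left
       = (t G hG a * t G hG ((t G hG b * t G hG c).left)).left
    have h1 : t G hG ((t G hG a * t G hG b).left) = t G hG a * t G hG b :=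
      (t_unique G hG (mul_mem (t_mem G hG a) (t_mem G hG b)) rfl).symm
    have h2 : t G hG ((t G hG b * t G hG c).left) = t G hG b * t G hG c :=
      (t_unique G hG (mul_mem (t_mem G hG b) (t_mem G hG c)) rfl).symm
    rw [h1, h2, mul_assoc]
  cone := 1
  cone_circ a := by
    show (t G hG 1 * t G hG a).left = a
    rw [t_one, one_mul, t_left]
  circ_cone a := by
    show (t G hG a * t G hG 1).left = a
    rw [t_one, mul_one, t_left]
  cinv a := ((t G hG a)⁻¹).left
  cinv_circ a := by
    show (t G hG (((t G hG a)⁻¹).left) * t G hG a).left = 1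
    have h : t G hG (((t G hG a)⁻¹).left) = (t G hG a)⁻¹ :=
      (t_unique G hG (inv_mem (t_mem G hG a)) rfl).symm
    rw [h, inv_mul_cancel]; rfl
  circ_cinv a := by
    show (t G hG a * t G hG (((t G hG a)⁻¹).left)).left = 1
    have h : t G hG (((t G hG a)⁻¹).left) = (t G hG a)⁻¹ :=
      (t_unique G hG (inv_mem (t_mem G hG a)) rfl).symm
    rw [h, mul_inv_cancel]; rfl
  compat a b c := by
    show (t G hG a * t G hG (b * c)).left
       = (t G hG a * t G hG b).left * a⁻¹ * (t G hG a * t G hG c).left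
    simp only [SemidirectProduct.mul_left, t_left, MonoidHom.id_apply]
    rw [map_mul]
    group

lemma ofReg_circ (x : Hol A) (hx : x ∈ G) (b : A) :
    (ofReg G hG).circ x.left b = x.left * x.right b := by
  have hx' : t G hG x.left = x := (t_unique G hG hx rfl).symm
  show (t G hG x.left * t G hG b).left = _
  rw [hx', SemidirectProduct.mul_left, t_left]
  rfl

end Reg

lemma brace_ext (B1 B2 : SkewBrace A) (h : B1.circ = B2.circ) : B1 = B2 := by
  have hcone : B1.cone = B2.cone := by rw [cone_eq_one B1, cone_eq_one B2]
  have hcinv : B1.cinv = B2.cinv := by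
    funext a
    have h1 : B1.circ a (B1.cinv a) = B1.circ a (B2.cinv a) := by
      rw [B1.circ_cinv, cone_eq_one B1, h, B2.circ_cinv, cone_eq_one B2]
    have inj : Function.Injective (B1.circ a) := by
      intro x y hxy
      have : B1.circ (B1.cinv a) (B1.circ a x) = B1.circ (B1.cinv a) (B1.circ a y) := by rw [hxy]
      rwa [← B1.circ_assoc, ← B1.circ_assoc, B1.cinv_circ, B1.cone_circ, B1.cone_circ] at this
    exact inj h1
  cases B1; cases B2
  simp_all

end SkewBraceAux

open SkewBraceAux in
/-- Bijective correspondence between skew brace structures on `A` with additive group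
`(A,·)` and regular subgroups of `Hol(A)`: a skew brace corresponds to the subgroup
`{(a, λ_a) : a ∈ A}`, and a regular subgroup `G` gives `a ∘ b = a · f(b)` where
`(a,f)` is the unique element of `G` with first coordinate `a`. -/
theorem skewBrace_equiv_regular_subgroups {A : Type*} [Group A] :
    ∃ e : SkewBrace A ≃ {G : Subgroup (Hol A) // IsRegularSubgroup G},
      (∀ B : SkewBrace A,
        (((e B : Subgroup (Hol A)) : Set (Hol A)) =
          {x : Hol A | ∀ b : A, x.left * x.right b = B.circ x.left b})) ∧
      (∀ G : {G : Subgroup (Hol A) // IsRegularSubgroup G},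
        ∀ x : Hol A, x ∈ (G : Subgroup (Hol A)) →
          ∀ b : A, (e.symm G).circ x.left b = x.left * x.right b) := by
  refine ⟨⟨fun B => ⟨toSub B, toSub_regular B⟩,
           fun G => ofReg G.1 G.2, ?_, ?_⟩, ?_, ?_⟩
  · intro B
    apply brace_ext
    funext a b
    show (t (toSub B) (toSub_regular B) a * t (toSub B) (toSub_regular B) b).left = B.circ a b
    have hta : t (toSub B) (toSub_regular B) a = (⟨a, lam B a⟩ : Hol A) := by
      exact (t_unique (toSub B) (toSub_regular B) (a := a) (y := ⟨a, lam B a⟩)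
        (fun c => (circ_eq_lam B a c).symm) rfl).symm
    rw [hta, SemidirectProduct.mul_left, t_left]
    exact (circ_eq_lam B a b).symm
  · intro G
    apply Subtype.ext
    show toSub (ofReg G.1 G.2) = G.1
    ext x
    have hcirc : ∀ b, (ofReg G.1 G.2).circ x.left b = x.left * (t G.1 G.2 x.left).right b := by
      intro b
      show (t G.1 G.2 x.left * t G.1 G.2 b).left = _
      simp only [SemidirectProduct.mul_left, t_left, MonoidHom.id_apply]
    constructor
    · intro hx
      have hx' : ∀ b : A, x.left * x.right b = (ofReg G.1 G.2).circ x.left b := hx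
      have hr : x.right = (t G.1 G.2 x.left).right := by
        ext c
        have h := hx' c
        rw [hcirc c] at h
        exact mul_left_cancel h
      have hxe : x = t G.1 G.2 x.left :=
        SemidirectProduct.ext (t_left G.1 G.2 x.left).symm hr
      rw [hxe]
      exact t_mem G.1 G.2 x.left
    · intro hx
      show ∀ b, x.left * x.right b = (ofReg G.1 G.2).circ x.left b
      intro b
      exact (ofReg_circ G.1 G.2 x hx b).symm
  · intro B; rfl
  · intro G x hx b
    exact ofReg_circ G.1 G.2 x hx b
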